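/- Let ψ : ℝ^d → ℝ^d be defined by ψ(x) = x(1+|x|^δ)^{-1} for some δ ≥ 2. Then for all x ∈ ℝ^d, the operator norm of the first derivative satisfies ‖ψ'(x)‖ ≤ 1 + δ/4. -/

import Mathlib

open EuclideanSpace

/-- For `ψ(x) = x (1 + |x|^δ)⁻¹` with `δ ≥ 2`, the operator norm of the
Fréchet derivative satisfies `‖ψ'(x)‖ ≤ 1 + δ/4`. -/
theorem stmt0 (d : ℕ) (δ : ℝ) (hδ : 2 ≤ δ)
    (ψ : EuclideanSpace ℝ (Fin d) → EuclideanSpace ℝ (Fin d))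
    (hψ : ∀ x, ψ x = (1 + ‖x‖ ^ δ)⁻¹ • x) :
    ∀ x : EuclideanSpace ℝ (Fin d), ‖fderiv ℝ ψ x‖ ≤ 1 + δ / 4 := by
  intro x
  set s : ℝ := ‖x‖ ^ 2 with hs
  set t : ℝ := ‖x‖ ^ δ with ht
  have hs0 : 0 ≤ s := by positivity
  have ht0 : 0 ≤ t := Real.rpow_nonneg (norm_nonneg x) δ
  have hts : t = s ^ (δ / 2) := by
    rw [hs, ht, ← Real.rpow_natCast ‖x‖ 2, ← Real.rpow_mul (norm_nonneg x)]
    norm_num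
    congr 1
    ring
  have h1pt : (0:ℝ) < 1 + t := by linarith
  have h2 : (0:ℝ) < (1 + t) ^ 2 := by positivity
  set c : ℝ := δ / 2 * s ^ (δ / 2 - 1) with hc
  have hc0 : 0 ≤ c := by positivity
  -- derivative of y ↦ ‖y‖ ^ δ
  have hsq : HasFDerivAt (fun y : EuclideanSpace ℝ (Fin d) => ‖y‖ ^ 2)
      (2 • (innerSL ℝ x)) x := (hasStrictFDerivAt_norm_sq x).hasFDerivAt
  have hpow : HasDerivAt (fun u : ℝ => u ^ (δ / 2)) c s :=
    Real.hasDerivAt_rpow_const (Or.inr (by linarith))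
  have hfun : (fun y : EuclideanSpace ℝ (Fin d) => ‖y‖ ^ δ)
      = fun y : EuclideanSpace ℝ (Fin d) => ((‖y‖ ^ 2 : ℝ)) ^ (δ / 2) := by
    funext y
    rw [← Real.rpow_natCast ‖y‖ 2, ← Real.rpow_mul (norm_nonneg y)]
    norm_num
    congr 1
    ring
  have hcomp : HasFDerivAt (fun y : EuclideanSpace ℝ (Fin d) => ‖y‖ ^ δ)
      (c • (2 • (innerSL ℝ x))) x := by
    rw [hfun]
    exact hpow.comp_hasFDerivAt x hsq
  -- derivative of u ↦ (1 + u)⁻¹ at t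
  have hφ : HasDerivAt (fun u : ℝ => (1 + u)⁻¹) (-1 / (1 + t) ^ 2) t := by
    have h := ((hasDerivAt_id t).const_add 1).inv h1pt.ne'
    simpa [Pi.inv_def] using h
  have hinv : HasFDerivAt (fun y : EuclideanSpace ℝ (Fin d) => (1 + ‖y‖ ^ δ)⁻¹)
      ((-1 / (1 + t) ^ 2) • (c • (2 • (innerSL ℝ x)))) x :=
    by have h := hφ.comp_hasFDerivAt x hcomp; exact h
  have hmain : HasFDerivAt ψ
      ((1 + t)⁻¹ • (ContinuousLinearMap.id ℝ (EuclideanSpace ℝ (Fin d))) +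
        ((-1 / (1 + t) ^ 2) • (c • (2 • (innerSL ℝ x)))).smulRight x) x := by
    have h := hinv.smul (hasFDerivAt_id x)
    have e : ψ = (fun y : EuclideanSpace ℝ (Fin d) => (1 + ‖y‖ ^ δ)⁻¹) • id := by
      funext y
      simp [hψ]
    rw [e]
    exact h
  rw [hmain.fderiv]
  have hM : (0:ℝ) ≤ 1 + δ / 4 := by linarith
  apply ContinuousLinearMap.opNorm_le_bound _ hM
  intro u
  have happ : ((1 + t)⁻¹ • (ContinuousLinearMap.id ℝ (EuclideanSpace ℝ (Fin d))) +
        ((-1 / (1 + t) ^ 2) • (c • (2 • (innerSL ℝ x)))).smulRight x) u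
      = (1 + t)⁻¹ • u + ((-1 / (1 + t) ^ 2) * (c * (2 * (inner ℝ x u : ℝ)))) • x := by
    simp [ContinuousLinearMap.smul_apply, mul_assoc]
  rw [happ]
  have hCS : |(inner ℝ x u : ℝ)| ≤ ‖x‖ * ‖u‖ := abs_real_inner_le_norm x u
  have hss : s ^ (δ / 2 - 1) * s ≤ t := by
    rcases eq_or_lt_of_le hs0 with h | h
    · rw [← h]; simpa using ht0
    · rw [hts]
      have : s ^ (δ / 2) = s ^ (δ / 2 - 1) * s := by
        rw [← Real.rpow_add_one h.ne']
        ring_nf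
      rw [this]
  -- pointwise bound
  have step1 : ‖(1 + t)⁻¹ • u + ((-1 / (1 + t) ^ 2) * (c * (2 * (inner ℝ x u : ℝ)))) • x‖
      ≤ (1 + t)⁻¹ * ‖u‖ + (1 / (1 + t) ^ 2) * (c * (2 * |(inner ℝ x u : ℝ)|)) * ‖x‖ := by
    refine (norm_add_le _ _).trans ?_
    rw [norm_smul, norm_smul]
    gcongr
    · rw [Real.norm_eq_abs, abs_of_pos (by positivity)]
    · have habs : |(-1 / (1 + t) ^ 2) * (c * (2 * (inner ℝ x u : ℝ)))|
          = (1 / (1 + t) ^ 2) * (c * (2 * |(inner ℝ x u : ℝ)|)) := by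
        rw [abs_mul, abs_mul, abs_mul, abs_div, abs_neg, abs_one, abs_of_pos h2,
          abs_mul 2, abs_two, abs_of_nonneg (show (0:ℝ) ≤ δ / 2 by linarith),
          abs_of_nonneg (Real.rpow_nonneg hs0 _), hc]
      rw [Real.norm_eq_abs]
      exact le_of_eq habs
  refine step1.trans ?_
  have hxx : ‖x‖ * ‖x‖ = s := by rw [hs]; ring
  have step2 : (1 / (1 + t) ^ 2) * (c * (2 * |(inner ℝ x u : ℝ)|)) * ‖x‖
      ≤ (1 / (1 + t) ^ 2) * (δ * t) * ‖u‖ := by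
    have h1 : c * (2 * |(inner ℝ x u : ℝ)|) * ‖x‖ ≤ δ * t * ‖u‖ := by
      have h3 : c * (2 * |(inner ℝ x u : ℝ)|) * ‖x‖ ≤ c * (2 * (‖x‖ * ‖u‖)) * ‖x‖ := by
        gcongr
      refine h3.trans ?_
      have : c * (2 * (‖x‖ * ‖u‖)) * ‖x‖ = δ * (s ^ (δ / 2 - 1) * s) * ‖u‖ := by
        rw [hc, ← hxx]; ring
      rw [this]
      have hd0 : (0:ℝ) ≤ δ := by linarith
      have := mul_le_mul_of_nonneg_left hss hd0
      exact mul_le_mul_of_nonneg_right this (norm_nonneg u)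
    calc (1 / (1 + t) ^ 2) * (c * (2 * |(inner ℝ x u : ℝ)|)) * ‖x‖
        = (1 / (1 + t) ^ 2) * (c * (2 * |(inner ℝ x u : ℝ)|) * ‖x‖) := by ring
      _ ≤ (1 / (1 + t) ^ 2) * (δ * t * ‖u‖) := by gcongr
      _ = (1 / (1 + t) ^ 2) * (δ * t) * ‖u‖ := by ring
  have key : (1 + t)⁻¹ + (1 / (1 + t) ^ 2) * (δ * t) ≤ 1 + δ / 4 := by
    have e : (1 + t)⁻¹ + (1 / (1 + t) ^ 2) * (δ * t) = ((1 + t) + δ * t) / (1 + t) ^ 2 := by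
      field_simp
    rw [e, div_le_iff₀ h2]
    nlinarith [sq_nonneg (1 - t), mul_nonneg (mul_nonneg (by linarith : (0:ℝ) ≤ δ) ht0) ht0]
  calc (1 + t)⁻¹ * ‖u‖ + (1 / (1 + t) ^ 2) * (c * (2 * |(inner ℝ x u : ℝ)|)) * ‖x‖
      ≤ (1 + t)⁻¹ * ‖u‖ + (1 / (1 + t) ^ 2) * (δ * t) * ‖u‖ := by linarith [step2]
    _ = ((1 + t)⁻¹ + (1 / (1 + t) ^ 2) * (δ * t)) * ‖u‖ := by ring
    _ ≤ (1 + δ / 4) * ‖u‖ := mul_le_mul_of_nonneg_right key (norm_nonneg u)
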